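/- For every even integer t ≥ 6, the sequence [0, t, t+1, t−1, t−3, …, 1, 2, 4, …, t−2] is a linear realization of {1^2, 2^{t−2}, t} on {0,…,t+1} in which t+1 and t are adjacent (special of type 1). -/
import Mathlib


/-- Multiset of absolute differences of consecutive entries of a list. -/
def pathDiffs (l : List ℕ) : Multiset ℕ :=
  ↑(List.zipWith (fun x y => max x y - min x y) l l.tail)

/-- `l` is a linear realization of the multiset `L`: a permutation of
`{0, …, |L|}` whose multiset of consecutive absolute differences is `L`. -/
def IsLinReal (L : Multiset ℕ) (l : List ℕ) : Prop :=
  l.Perm (List.range (Multiset.card L + 1)) ∧ pathDiffs l = L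

/-- The cyclic edge-length `ℓ(x,y) = min(|x−y|, v−|x−y|)` in `K_v`. -/
def cycLen (v x y : ℕ) : ℕ := min (max x y - min x y) (v - (max x y - min x y))

def cycDiffs (v : ℕ) (l : List ℕ) : Multiset ℕ :=
  ↑(List.zipWith (cycLen v) l l.tail)

/-- `l` is a cyclic realization of `L`: a Hamiltonian path of `K_v` on
`{0, …, v−1}` (with `v = |L|+1`) whose multiset of cyclic edge-lengths is `L`. -/
def IsCycReal (L : Multiset ℕ) (l : List ℕ) : Prop :=
  l.Perm (List.range (Multiset.card L + 1)) ∧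
    cycDiffs (Multiset.card L + 1) l = L

/-- Vertices `a` and `b` are adjacent (consecutive, in either order) in the path `l`. -/
def AdjIn (a b : ℕ) (l : List ℕ) : Prop :=
  [a, b] <:+: l ∨ [b, a] <:+: l

/-- The endpoints of the path `l` are `0` and `1`. -/
def Ends01 (l : List ℕ) : Prop :=
  (l.head? = some 0 ∧ l.getLast? = some 1) ∨
    (l.head? = some 1 ∧ l.getLast? = some 0)

lemma pathDiffs_cons_cons (a b : ℕ) (l : List ℕ) :
    pathDiffs (a :: b :: l) = (max a b - min a b) ::ₘ pathDiffs (b :: l) := rfl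

lemma pathDiffs_append_cons (l₁ : List ℕ) (x : ℕ) (l₂ : List ℕ) :
    pathDiffs (l₁ ++ x :: l₂) = pathDiffs (l₁ ++ [x]) + pathDiffs (x :: l₂) := by
  induction l₁ with
  | nil => simp [pathDiffs]
  | cons a l₁ ih =>
      cases l₁ with
      | nil => simp [pathDiffs_cons_cons, pathDiffs]
      | cons b l₁' =>
          simp only [List.cons_append, pathDiffs_cons_cons] at *
          rw [ih, Multiset.cons_add]

lemma descList_succ (m a : ℕ) :
    (List.range (m+1)).map (fun i => a - 2*i)
      = a :: (List.range m).map (fun i => (a-2) - 2*i) := by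
  rw [List.range_succ_eq_map]
  simp only [List.map_cons, List.map_map, Nat.mul_zero, Nat.sub_zero]
  congr 1
  apply List.map_congr_left
  intro i _
  simp [Function.comp, Nat.succ_eq_add_one]
  omega

lemma ascList_succ (m a : ℕ) :
    (List.range (m+1)).map (fun i => a + 2*i)
      = a :: (List.range m).map (fun i => (a+2) + 2*i) := by
  rw [List.range_succ_eq_map]
  simp only [List.map_cons, List.map_map, Nat.mul_zero, Nat.add_zero]
  congr 1
  apply List.map_congr_left
  intro i _
  simp [Function.comp, Nat.succ_eq_add_one]
  omega

lemma pathDiffs_desc : ∀ (m a : ℕ), 2*m ≤ a →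
    pathDiffs ((List.range (m+1)).map (fun i => a - 2*i)) = Multiset.replicate m 2 := by
  intro m
  induction m with
  | zero => intro a _; simp [pathDiffs, List.range_succ]
  | succ m ih =>
      intro a ha
      rw [descList_succ (m+1) a, descList_succ m (a-2), pathDiffs_cons_cons,
          ← descList_succ m (a-2), ih (a-2) (by omega)]
      have h1 : max a (a-2) - min a (a-2) = 2 := by omega
      rw [h1, Multiset.replicate_succ]

lemma pathDiffs_asc : ∀ (m a : ℕ),
    pathDiffs ((List.range (m+1)).map (fun i => a + 2*i)) = Multiset.replicate m 2 := by
  intro m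
  induction m with
  | zero => intro a; simp [pathDiffs, List.range_succ]
  | succ m ih =>
      intro a
      rw [ascList_succ (m+1) a, ascList_succ m (a+2), pathDiffs_cons_cons,
          ← ascList_succ m (a+2), ih (a+2)]
      have h1 : max a (a+2) - min a (a+2) = 2 := by omega
      rw [h1, Multiset.replicate_succ]

lemma multiset_OE : ∀ k, 1 ≤ k →
    ((((List.range k).map (fun i => (2*k-1) - 2*i) : List ℕ) : Multiset ℕ)
      + (((List.range (k-1)).map (fun i => 2 + 2*i) : List ℕ) : Multiset ℕ))
    = (↑(List.range' 1 (2*k-1)) : Multiset ℕ) := by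
  intro k hk
  induction k, hk using Nat.le_induction with
  | base => simp [List.range_succ, List.range'_succ]
  | succ k hk ih =>
      have hO : (List.range (k+1)).map (fun i => (2*(k+1)-1) - 2*i)
          = (2*k+1) :: (List.range k).map (fun i => (2*k-1) - 2*i) := by
        have h1 : (fun i => (2*(k+1)-1) - 2*i) = (fun i => (2*k+1) - 2*i) := by
          funext i; omega
        rw [h1, descList_succ]
        have h2 : 2*k+1-2 = 2*k-1 := by omega
        rw [h2]
      have hE : (List.range (k+1-1)).map (fun i => 2 + 2*i)
          = (List.range (k-1)).map (fun i => 2 + 2*i) ++ [2*k] := by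
        have h2 : k+1-1 = (k-1)+1 := by omega
        rw [h2, List.range_succ, List.map_append]
        simp
        omega
      have hR : (List.range' 1 (2*(k+1)-1)) =
          (List.range' 1 (2*k-1)) ++ [2*k] ++ [2*k+1] := by
        have h3 : 2*(k+1)-1 = (2*k-1)+1+1 := by omega
        rw [h3, List.range'_concat, List.range'_concat]
        have e1 : 1 + 1 * (2*k-1) = 2*k := by omega
        rw [e1]
        have e2 : 1 + 1 * (2*k-1+1) = 2*k+1 := by omega
        rw [e2]
      rw [hO, hE, hR]
      simp only [← Multiset.cons_coe, ← Multiset.coe_add, ← ih, ← Multiset.singleton_add,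
        Multiset.coe_singleton]
      ac_rfl

theorem stmt16 (t : ℕ) (ht : Even t) (h6 : 6 ≤ t) :
    ∃ l : List ℕ,
      l = [0, t, t+1] ++ (List.range (t/2)).map (fun i => t - 1 - 2*i) ++
          (List.range (t/2 - 1)).map (fun i => 2 + 2*i) ∧
      IsLinReal (Multiset.replicate 2 1 + Multiset.replicate (t-2) 2 + {t}) l ∧
      AdjIn (t+1) t l := by
  obtain ⟨j, hj⟩ : ∃ j, t = 2*j + 6 := by
    obtain ⟨r, hr⟩ := ht; exact ⟨t/2 - 3, by omega⟩
  subst hj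
  refine ⟨[0, 2*j+6, 2*j+6+1] ++ (List.range (j+3)).map (fun i => (2*j+5) - 2*i)
      ++ (List.range (j+2)).map (fun i => 2 + 2*i), ?_, ⟨?_, ?_⟩, ?_⟩
  · rw [show (2*j+6)/2 = j+3 from by omega, show j+3-1 = j+2 from by omega,
        show (fun i => 2*j+6 - 1 - 2*i) = (fun i => (2*j+5) - 2*i) from by funext i; omega]
  · -- permutation
    have hcard : Multiset.card
        (Multiset.replicate 2 1 + Multiset.replicate (2*j+6-2) 2 + ({2*j+6} : Multiset ℕ)) + 1
        = 2*j+8 := by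
      simp [Multiset.card_replicate]
    rw [hcard, ← Multiset.coe_eq_coe]
    have hOE := multiset_OE (j+3) (by omega)
    rw [show 2*(j+3)-1 = 2*j+5 from by omega, show (j+3)-1 = j+2 from by omega] at hOE
    have r1 : ∀ n : ℕ, (↑(List.range (n+1)) : Multiset ℕ) = ↑(List.range n) + {n} := by
      intro n
      rw [List.range_succ, ← Multiset.coe_add, Multiset.coe_singleton]
    have hRng : (↑(List.range (2*j+8)) : Multiset ℕ)
        = {0} + ↑(List.range' 1 (2*j+5)) + {2*j+6} + {2*j+7} := by
      calc (↑(List.range (2*j+8)) : Multiset ℕ)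
          = ↑(List.range ((2*j+7)+1)) := by rw [show 2*j+8 = (2*j+7)+1 from by omega]
        _ = ↑(List.range (2*j+7)) + {2*j+7} := r1 _
        _ = ↑(List.range ((2*j+6)+1)) + {2*j+7} := by
              rw [show 2*j+7 = (2*j+6)+1 from by omega]
        _ = ↑(List.range (2*j+6)) + {2*j+6} + {2*j+7} := by rw [r1]
        _ = {0} + ↑(List.range' 1 (2*j+5)) + {2*j+6} + {2*j+7} := by
              rw [List.range_eq_range', show 2*j+6 = (2*j+5)+1 from by omega,
                List.range'_succ]
              simp [← Multiset.cons_coe, ← Multiset.singleton_add]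
    rw [hRng, ← hOE]
    simp only [List.cons_append, List.nil_append, ← Multiset.coe_add, ← Multiset.cons_coe,
      ← Multiset.singleton_add, Multiset.coe_singleton, Multiset.coe_nil, add_zero, zero_add]
    rw [show 2*j+6+1 = 2*j+7 from by omega]
    ac_rfl
  · -- pathDiffs
    have hOsplit : (List.range (j+3)).map (fun i => (2*j+5) - 2*i)
        = (List.range (j+2)).map (fun i => (2*j+5) - 2*i) ++ [1] := by
      rw [show j+3 = (j+2)+1 from rfl, List.range_succ, List.map_append]
      simp only [List.map_cons, List.map_nil, show 2*j+5-2*(j+2) = 1 from by omega]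
    have hE2 : (List.range (j+2)).map (fun i => 2 + 2*i)
        = 2 :: (List.range (j+1)).map (fun i => 4 + 2*i) := by
      have h := ascList_succ (j+1) 2
      rw [show j+1+1 = j+2 from by omega] at h
      rw [h]
    have hlist : ([0, 2*j+6, 2*j+6+1] ++ (List.range (j+3)).map (fun i => (2*j+5) - 2*i)
          ++ (List.range (j+2)).map (fun i => 2 + 2*i) : List ℕ)
        = 0 :: (2*j+6) :: (2*j+7) ::
            ((List.range (j+2)).map (fun i => (2*j+5) - 2*i)
              ++ 1 :: (List.range (j+2)).map (fun i => 2 + 2*i)) := by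
      rw [hOsplit]
      simp only [List.cons_append, List.nil_append, List.append_assoc,
        List.singleton_append]
    rw [hlist, pathDiffs_cons_cons, pathDiffs_cons_cons, ← List.cons_append,
        pathDiffs_append_cons]
    have hDfull : (List.range ((j+3)+1)).map (fun i => (2*j+7) - 2*i)
        = (2*j+7) :: ((List.range (j+2)).map (fun i => (2*j+5) - 2*i) ++ [1]) := by
      rw [descList_succ (j+3) (2*j+7), show 2*j+7-2 = 2*j+5 from by omega, hOsplit]
    rw [List.cons_append, ← hDfull, pathDiffs_desc (j+3) (2*j+7) (by omega)]
    rw [hE2, pathDiffs_cons_cons, ← hE2]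
    have hasc := pathDiffs_asc (j+1) 2
    rw [show j+1+1 = j+2 from by omega] at hasc
    rw [hasc]
    rw [show max 0 (2*j+6) - min 0 (2*j+6) = 2*j+6 from by omega,
        show max (2*j+6) (2*j+7) - min (2*j+6) (2*j+7) = 1 from by omega,
        show max 1 2 - min 1 2 = 1 from by omega,
        show 2*j+6-2 = (j+3)+(j+1) from by omega,
        Multiset.replicate_add (j+3) (j+1) 2,
        show (Multiset.replicate 2 1 : Multiset ℕ) = {1} + {1} from by decide]
    simp only [← Multiset.singleton_add]
    ac_rfl
  · -- adjacency
    exact Or.inr ⟨[0], (List.range (j+3)).map (fun i => (2*j+5) - 2*i)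
      ++ (List.range (j+2)).map (fun i => 2 + 2*i), by simp⟩
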